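/- Let ρ be a two-qubit density matrix and set E_zz = ⟨Z⊗Z⟩, E_zx = ⟨Z⊗X⟩, E_xz = ⟨X⊗Z⟩, E_xx = ⟨X⊗X⟩ (expectation values in ρ). Then E_zz² + E_zx² ≤ 1, E_xz² + E_xx² ≤ 1, and (1 - E_zz² - E_zx²)(1 - E_xz² - E_xx²) ≥ (E_zz E_xz + E_zx E_xx)². -/

import Mathlib

open Matrix Kronecker ComplexOrder

noncomputable def PauliZ : Matrix (Fin 2) (Fin 2) ℂ := !![1, 0; 0, -1]
noncomputable def PauliX : Matrix (Fin 2) (Fin 2) ℂ := !![0, 1; 1, 0]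

noncomputable def Spin (a b : ℝ) : Matrix (Fin 2) (Fin 2) ℂ :=
  (a : ℂ) • PauliZ + (b : ℂ) • PauliX

lemma Spin_herm (a b : ℝ) : (Spin a b)ᴴ = Spin a b := by
  ext i j
  fin_cases i <;> fin_cases j <;>
    simp [Spin, PauliZ, PauliX, conjTranspose_apply]

lemma Spin_mul_Spin (a b : ℝ) : Spin a b * Spin a b = ((a^2 + b^2 : ℝ) : ℂ) • 1 := by
  ext i j
  fin_cases i <;> fin_cases j <;>
    simp [Spin, PauliZ, PauliX, Matrix.mul_apply, Fin.sum_univ_two, Matrix.one_apply] <;>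
    push_cast <;> ring

lemma kron_conjT (A B : Matrix (Fin 2) (Fin 2) ℂ) : (A ⊗ₖ B)ᴴ = Aᴴ ⊗ₖ Bᴴ := by
  ext ⟨i,j⟩ ⟨k,l⟩
  simp [conjTranspose_apply, kroneckerMap_apply, star_mul']

lemma diag_nn {n : Type*} [Fintype n] [DecidableEq n] {N : Matrix n n ℂ}
    (hN : N.PosSemidef) (i : n) : 0 ≤ N i i := by
  exact hN.diag_nonneg

lemma trace_psd_mul {n : Type*} [Fintype n] [DecidableEq n] {M ρ : Matrix n n ℂ}
    (hM : M.PosSemidef) (hρ : ρ.PosSemidef) : 0 ≤ (M * ρ).trace := by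
  obtain ⟨B, hB⟩ : ∃ B : Matrix n n ℂ, ρ = Bᴴ * B := by
    open scoped MatrixOrder Matrix.Norms.L2Operator in
    exact CStarAlgebra.nonneg_iff_eq_star_mul_self.mp hρ.nonneg
  have h1 : (M * ρ).trace = (B * M * Bᴴ).trace := by
    rw [hB, ← mul_assoc, trace_mul_cycle]
  rw [h1, Matrix.trace]
  exact Finset.sum_nonneg fun i _ => diag_nn (hM.mul_mul_conjTranspose_same B) i

lemma psd_shift {n : Type*} [Fintype n] [DecidableEq n] (B : Matrix n n ℂ) (c : ℝ)
    (hc : 0 ≤ c) (hBH : Bᴴ = B) (hB2 : B * B = ((c^2 : ℝ) : ℂ) • 1) :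
    PosSemidef ((c : ℂ) • 1 + B) := by
  rcases eq_or_lt_of_le hc with h0 | h0
  · have hB0 : B = 0 := by
      rw [← Matrix.conjTranspose_mul_self_eq_zero (A := B), hBH, hB2, ← h0]
      simp
    rw [hB0, ← h0]
    simpa using Matrix.PosSemidef.zero
  · set M : Matrix n n ℂ := (c : ℂ) • 1 + B with hM
    have hMH : Mᴴ = M := by
      rw [hM, conjTranspose_add, conjTranspose_smul, hBH, conjTranspose_one,
        Complex.star_def, Complex.conj_ofReal]
    have hMM : M * M = ((2*c : ℝ) : ℂ) • M := by
      simp only [hM, add_mul, mul_add, Matrix.smul_mul, Matrix.mul_smul, Matrix.one_mul,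
        Matrix.mul_one, hB2, smul_smul, smul_add]
      push_cast
      module
    set r : ℝ := (Real.sqrt (2*c))⁻¹ with hr
    set D : Matrix n n ℂ := (r : ℂ) • M with hD
    have hDH : Dᴴ = (r : ℂ) • M := by
      rw [hD, conjTranspose_smul, hMH, Complex.star_def, Complex.conj_ofReal]
    have key : M = Dᴴ * D := by
      rw [hDH, hD, Matrix.smul_mul, Matrix.mul_smul, smul_smul, hMM, smul_smul]
      have h2c : (0:ℝ) < 2*c := by linarith
      have hs : r * r * (2*c) = 1 := by
        rw [hr, ← mul_inv, Real.mul_self_sqrt h2c.le]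
        field_simp
      have : (r : ℂ) * (r : ℂ) * ((2*c : ℝ) : ℂ) = 1 := by
        rw [← Complex.ofReal_mul, ← Complex.ofReal_mul, hs, Complex.ofReal_one]
      rw [this, one_smul]
    rw [key]
    exact posSemidef_conjTranspose_mul_self D

lemma key_ineq (ρ : Matrix (Fin 2 × Fin 2) (Fin 2 × Fin 2) ℂ)
    (hρ : ρ.PosSemidef) (htr : ρ.trace = 1) (u1 u2 v1 v2 : ℝ) :
    (u1*v1*((PauliZ ⊗ₖ PauliZ) * ρ).trace.re + u1*v2*((PauliZ ⊗ₖ PauliX) * ρ).trace.re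
      + u2*v1*((PauliX ⊗ₖ PauliZ) * ρ).trace.re + u2*v2*((PauliX ⊗ₖ PauliX) * ρ).trace.re)^2
      ≤ (u1^2+u2^2)*(v1^2+v2^2) := by
  set A : Matrix (Fin 2 × Fin 2) (Fin 2 × Fin 2) ℂ := Spin u1 u2 ⊗ₖ Spin v1 v2 with hA
  have hAH : Aᴴ = A := by rw [hA, kron_conjT, Spin_herm, Spin_herm]
  set c : ℝ := Real.sqrt ((u1^2+u2^2)*(v1^2+v2^2)) with hc
  have hpq : (0:ℝ) ≤ (u1^2+u2^2)*(v1^2+v2^2) := by positivity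
  have hc0 : 0 ≤ c := Real.sqrt_nonneg _
  have hc2 : c^2 = (u1^2+u2^2)*(v1^2+v2^2) := Real.sq_sqrt hpq
  have hA2 : A * A = ((c^2 : ℝ) : ℂ) • 1 := by
    rw [hA, ← mul_kronecker_mul, Spin_mul_Spin, Spin_mul_Spin, smul_kronecker,
      kronecker_smul, one_kronecker_one, smul_smul, hc2]
    push_cast
    ring_nf
  have psd1 : PosSemidef ((c : ℂ) • 1 + A) := psd_shift A c hc0 hAH hA2
  have psd2 : PosSemidef ((c : ℂ) • 1 + (-A)) := by
    refine psd_shift (-A) c hc0 ?_ ?_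
    · rw [conjTranspose_neg, hAH]
    · rw [neg_mul_neg, hA2]
  -- expand A as linear combination
  have hexp : A = ((u1*v1 : ℝ) : ℂ) • (PauliZ ⊗ₖ PauliZ) + ((u1*v2 : ℝ) : ℂ) • (PauliZ ⊗ₖ PauliX)
      + ((u2*v1 : ℝ) : ℂ) • (PauliX ⊗ₖ PauliZ) + ((u2*v2 : ℝ) : ℂ) • (PauliX ⊗ₖ PauliX) := by
    rw [hA]
    simp only [Spin, add_kronecker, kronecker_add, smul_kronecker, kronecker_smul, smul_smul]
    push_cast
    module
  set t : ℝ := (A * ρ).trace.re with ht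
  have htre : t = u1*v1*((PauliZ ⊗ₖ PauliZ) * ρ).trace.re
      + u1*v2*((PauliZ ⊗ₖ PauliX) * ρ).trace.re
      + u2*v1*((PauliX ⊗ₖ PauliZ) * ρ).trace.re
      + u2*v2*((PauliX ⊗ₖ PauliX) * ρ).trace.re := by
    rw [ht, hexp]
    simp [Matrix.add_mul, Matrix.smul_mul, trace_add, trace_smul, smul_eq_mul,
      Complex.add_re, Complex.re_ofReal_mul]
  have h1 : 0 ≤ c + t := by
    have := trace_psd_mul psd1 hρ
    rw [Matrix.add_mul, Matrix.smul_mul, Matrix.one_mul, trace_add, trace_smul,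
      smul_eq_mul, htr, mul_one] at this
    have := (Complex.le_def.mp this).1
    simpa [ht] using this
  have h2 : 0 ≤ c - t := by
    have := trace_psd_mul psd2 hρ
    rw [Matrix.add_mul, Matrix.smul_mul, Matrix.one_mul, trace_add, trace_smul,
      smul_eq_mul, htr, mul_one, Matrix.neg_mul, trace_neg] at this
    have := (Complex.le_def.mp this).1
    simpa [ht] using this
  rw [← htre, ← hc2]
  nlinarith [mul_nonneg h1 h2]

theorem stmt_7 (ρ : Matrix (Fin 2 × Fin 2) (Fin 2 × Fin 2) ℂ)
    (hρ : ρ.PosSemidef) (htr : ρ.trace = 1)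
    (Ezz Ezx Exz Exx : ℝ)
    (hzz : Ezz = ((PauliZ ⊗ₖ PauliZ) * ρ).trace.re)
    (hzx : Ezx = ((PauliZ ⊗ₖ PauliX) * ρ).trace.re)
    (hxz : Exz = ((PauliX ⊗ₖ PauliZ) * ρ).trace.re)
    (hxx : Exx = ((PauliX ⊗ₖ PauliX) * ρ).trace.re) :
    Ezz^2 + Ezx^2 ≤ 1 ∧ Exz^2 + Exx^2 ≤ 1 ∧
      (Ezz * Exz + Ezx * Exx)^2 ≤ (1 - Ezz^2 - Ezx^2) * (1 - Exz^2 - Exx^2) := by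
  have K : ∀ u1 u2 v1 v2 : ℝ,
      (u1*v1*Ezz + u1*v2*Ezx + u2*v1*Exz + u2*v2*Exx)^2 ≤ (u1^2+u2^2)*(v1^2+v2^2) := by
    intro u1 u2 v1 v2
    rw [hzz, hzx, hxz, hxx]
    exact key_ineq ρ hρ htr u1 u2 v1 v2
  have ha : Ezz^2 + Ezx^2 ≤ 1 := by
    have := K 1 0 Ezz Ezx
    nlinarith [sq_nonneg Ezz, sq_nonneg Ezx]
  have hb : Exz^2 + Exx^2 ≤ 1 := by
    have := K 0 1 Exz Exx
    nlinarith [sq_nonneg Exz, sq_nonneg Exx]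
  refine ⟨ha, hb, ?_⟩
  have hG : ∀ t s : ℝ, (Ezz^2+Ezx^2)*t^2 + 2*(Ezz*Exz+Ezx*Exx)*t*s + (Exz^2+Exx^2)*s^2
      ≤ t^2 + s^2 := by
    intro t s
    have h := K t s (t*Ezz+s*Exz) (t*Ezx+s*Exx)
    have hw : (0:ℝ) ≤ (t*Ezz+s*Exz)^2 + (t*Ezx+s*Exx)^2 := by positivity
    nlinarith [sq_nonneg t, sq_nonneg s, sq_nonneg (t*Ezz+s*Exz), sq_nonneg (t*Ezx+s*Exx)]
  set b := Ezz*Exz + Ezx*Exx with hbdef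
  set m := 1 - (Ezz^2+Ezx^2) with hmdef
  set n := 1 - (Exz^2+Exx^2) with hndef
  have hm : 0 ≤ m := by simp [hmdef]; linarith
  have hn : 0 ≤ n := by simp [hndef]; linarith
  have key2 : ∀ t s : ℝ, 2*b*t*s ≤ m*t^2 + n*s^2 := by
    intro t s
    have := hG t s
    nlinarith
  have h1 := key2 b m
  have h2 := key2 n b
  have h3 := key2 b 1
  have goal : b^2 ≤ m*n := by
    rcases eq_or_lt_of_le (by positivity : (0:ℝ) ≤ m + n) with h0 | h0
    · have hm0 : m = 0 := by linarith
      have hn0 : n = 0 := by linarith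
      rw [hm0, hn0] at h3 ⊢
      nlinarith
    · nlinarith
  calc (Ezz * Exz + Ezx * Exx)^2 = b^2 := by rw [hbdef]
    _ ≤ m*n := goal
    _ = (1 - Ezz^2 - Ezx^2) * (1 - Exz^2 - Exx^2) := by rw [hmdef, hndef]; ring
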